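/- arXiv:1708.08344 — 5 statements merged into one kernel-verified Lean document; each statement's English description precedes it below -/
import Mathlib

section
/- Let α > 0 and let f : (0,∞) → (0,∞) be nonincreasing and regularly varying at 0 with index -α, with f(x) → ∞ as x ↓ 0. Then for every u > 0 and y > 0, t·f(u·f^←(y/t)) → u^{-α}·y as t ↓ 0. -/
open MeasureTheory Filter Topology

/-- Generalized inverse of a nonincreasing function `f : (0,∞) → (0,∞)`:
`f^←(y) = inf {x > 0 : f x ≤ y}`. -/
noncomputable def geninv (f : ℝ → ℝ) (y : ℝ) : ℝ := sInf {x : ℝ | 0 < x ∧ f x ≤ y}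

lemma geninv_key (f : ℝ → ℝ) (hpos : ∀ x : ℝ, 0 < x → 0 < f x)
    (hmono : AntitoneOn f (Set.Ioi (0 : ℝ)))
    (hinf : Tendsto f (nhdsWithin 0 (Set.Ioi 0)) atTop)
    (s : ℝ) (hs1 : f 1 ≤ s) :
    0 < geninv f s ∧ (∀ x, 0 < x → x < geninv f s → s < f x) ∧
      (∀ x, geninv f s < x → f x ≤ s) := by
  set S : Set ℝ := {x : ℝ | 0 < x ∧ f x ≤ s} with hS
  have hne : S.Nonempty := ⟨1, one_pos, hs1⟩
  have hbdd : BddBelow S := ⟨0, fun x hx => hx.1.le⟩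
  have hgs : geninv f s = sInf S := rfl
  have hδev : ∀ᶠ x in nhdsWithin (0:ℝ) (Set.Ioi 0), s < f x :=
    hinf.eventually (eventually_gt_atTop s)
  rw [eventually_nhdsWithin_iff, Metric.eventually_nhds_iff] at hδev
  obtain ⟨δ, hδ0, hδ'⟩ := hδev
  have hg0 : 0 < geninv f s := by
    have hδle : ∀ x ∈ S, δ ≤ x := by
      intro x hx
      by_contra h
      push_neg at h
      have hd : dist x 0 < δ := by
        rw [Real.dist_eq, sub_zero, abs_of_pos hx.1]; exact h
      exact absurd hx.2 (not_le.2 (hδ' hd hx.1))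
    exact lt_of_lt_of_le hδ0 (le_csInf hne hδle)
  refine ⟨hg0, ?_, ?_⟩
  · intro x hx0 hxlt
    by_contra h
    push_neg at h
    exact absurd (csInf_le hbdd ⟨hx0, h⟩) (not_le.2 hxlt)
  · intro x hx
    obtain ⟨z, hz, hzx⟩ := (csInf_lt_iff hbdd hne).1 hx
    exact le_trans (hmono hz.1 (Set.mem_Ioi.2 (lt_trans hg0 hx)) hzx.le) hz.2

/-- if `f : (0,∞) → (0,∞)` is nonincreasing, regularly varying at 0 with
index `-α` (`α > 0`) and `f(x) → ∞` as `x ↓ 0`, then for all `u, y > 0`,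
`t · f(u · f^←(y/t)) → u^{-α} · y` as `t ↓ 0`. -/
theorem stmt0 (α : ℝ) (hα : 0 < α) (f : ℝ → ℝ)
    (hpos : ∀ x : ℝ, 0 < x → 0 < f x)
    (hmono : AntitoneOn f (Set.Ioi (0 : ℝ)))
    (hrv : ∀ l : ℝ, 0 < l →
      Tendsto (fun x : ℝ => f (l * x) / f x) (nhdsWithin 0 (Set.Ioi 0)) (nhds (l ^ (-α))))
    (hinf : Tendsto f (nhdsWithin 0 (Set.Ioi 0)) atTop)
    (u y : ℝ) (hu : 0 < u) (hy : 0 < y) :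
    Tendsto (fun t : ℝ => t * f (u * geninv f (y / t)))
      (nhdsWithin 0 (Set.Ioi 0)) (nhds (u ^ (-α) * y)) := by
  set F := nhdsWithin (0:ℝ) (Set.Ioi 0) with hFdef
  set g : ℝ → ℝ := fun t => geninv f (y / t) with hgdef
  have hs : Tendsto (fun t : ℝ => y / t) F atTop := by
    simpa [div_eq_mul_inv] using tendsto_inv_nhdsGT_zero.const_mul_atTop hy
  have hev : ∀ᶠ t in F, 0 < t ∧ f 1 ≤ y / t := by
    filter_upwards [eventually_mem_nhdsWithin, hs.eventually (eventually_ge_atTop (f 1))]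
      with t h1 h2
    exact ⟨h1, h2⟩
  have hK : ∀ᶠ t in F, 0 < g t ∧ (∀ x, 0 < x → x < g t → y / t < f x) ∧
      (∀ x, g t < x → f x ≤ y / t) := by
    filter_upwards [hev] with t ht
    exact geninv_key f hpos hmono hinf (y / t) ht.2
  -- g tends to 0 within Ioi 0
  have hgt0 : Tendsto g F (nhds 0) := by
    rw [tendsto_order]
    constructor
    · intro a ha
      filter_upwards [hK] with t ht
      exact lt_trans ha ht.1
    · intro b hb
      filter_upwards [hs.eventually (eventually_ge_atTop (f (b / 2)))] with t ht
      have hmem : b / 2 ∈ {x : ℝ | 0 < x ∧ f x ≤ y / t} := ⟨by positivity, ht⟩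
      have : g t ≤ b / 2 := csInf_le ⟨0, fun x hx => hx.1.le⟩ hmem
      linarith
  have hgF : Tendsto g F F := by
    rw [hFdef, tendsto_nhdsWithin_iff]
    exact ⟨hgt0, by filter_upwards [hK] with t ht; exact Set.mem_Ioi.2 ht.1⟩
  have hratio : ∀ l : ℝ, 0 < l →
      Tendsto (fun t => f (l * g t) / f (g t)) F (nhds (l ^ (-α))) :=
    fun l hl => (hrv l hl).comp hgF
  have hscale : ∀ l : ℝ, 0 < l → Tendsto (fun t => l⁻¹ * g t) F F := by
    intro l hl
    rw [hFdef, tendsto_nhdsWithin_iff]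
    constructor
    · have := hgt0.const_mul l⁻¹
      simpa using this
    · filter_upwards [hK] with t ht
      exact Set.mem_Ioi.2 (mul_pos (inv_pos.2 hl) ht.1)
  have hB : ∀ l : ℝ, 0 < l →
      Tendsto (fun t => f (g t) / f (l⁻¹ * g t)) F (nhds (l ^ (-α))) := by
    intro l hl
    have h1 := (hrv l hl).comp (hscale l hl)
    refine h1.congr fun t => ?_
    simp only [Function.comp]
    rw [← mul_assoc, mul_inv_cancel₀ hl.ne', one_mul]
  -- the main asymptotic: f(g t)/(y/t) → 1
  have hone : Tendsto (fun t => f (g t) / (y / t)) F (nhds 1) := by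
    rw [tendsto_order]
    constructor
    · intro c hc
      obtain ⟨l, hl1, hcl⟩ : ∃ l : ℝ, 1 < l ∧ c < l ^ (-α) := by
        rcases le_or_gt c 0 with h | h
        · exact ⟨2, one_lt_two, h.trans_lt (Real.rpow_pos_of_pos two_pos _)⟩
        · refine ⟨c ^ (-1 / (2 * α)), ?_, ?_⟩
          · rw [Real.one_lt_rpow_iff_of_pos h]
            right
            constructor
            · exact hc
            · rw [div_neg_iff]; right
              exact ⟨by norm_num, by positivity⟩
          · have heq : (c ^ (-1 / (2 * α))) ^ (-α) = c ^ (2⁻¹ : ℝ) := by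
              rw [← Real.rpow_mul h.le]
              congr 1
              field_simp
            rw [heq]
            nth_rewrite 1 [← Real.rpow_one c]
            exact Real.rpow_lt_rpow_of_exponent_gt h hc (by norm_num)
      have hBl := hB l (lt_trans one_pos hl1)
      filter_upwards [hBl.eventually (eventually_gt_nhds hcl), hK, hev] with t h1 h2 h3
      have hg0 := h2.1
      have hlg : l⁻¹ * g t < g t := mul_lt_of_lt_one_left hg0 (inv_lt_one_of_one_lt₀ hl1)
      have hlgpos : 0 < l⁻¹ * g t := by positivity
      have hsf : y / t ≤ f (l⁻¹ * g t) := (h2.2.1 _ hlgpos hlg).le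
      have hst : 0 < y / t := div_pos hy h3.1
      calc c < f (g t) / f (l⁻¹ * g t) := h1
        _ ≤ f (g t) / (y / t) := div_le_div_of_nonneg_left (hpos _ hg0).le hst hsf
    · intro c hc
      obtain ⟨l, hl0, hl1, hcl⟩ : ∃ l : ℝ, 0 < l ∧ l < 1 ∧ l ^ (-α) < c := by
        refine ⟨c ^ (-1 / (2 * α)), Real.rpow_pos_of_pos (lt_trans one_pos hc) _, ?_, ?_⟩
        · apply Real.rpow_lt_one_of_one_lt_of_neg hc
          rw [div_neg_iff]; right
          exact ⟨by norm_num, by positivity⟩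
        · have hc0 : 0 < c := lt_trans one_pos hc
          have heq : (c ^ (-1 / (2 * α))) ^ (-α) = c ^ (2⁻¹ : ℝ) := by
            rw [← Real.rpow_mul hc0.le]
            congr 1
            field_simp
          rw [heq]
          nth_rewrite 2 [← Real.rpow_one c]
          exact Real.rpow_lt_rpow_of_exponent_lt hc (by norm_num)
      have hBl := hB l hl0
      filter_upwards [hBl.eventually (eventually_lt_nhds hcl), hK, hev] with t h1 h2 h3
      have hg0 := h2.1
      have hinv1 : 1 < l⁻¹ := (one_lt_inv₀ hl0).2 hl1
      have hlg : g t < l⁻¹ * g t := lt_mul_of_one_lt_left hg0 hinv1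
      have hsf : f (l⁻¹ * g t) ≤ y / t := h2.2.2 _ hlg
      have hfl : 0 < f (l⁻¹ * g t) := hpos _ (by positivity)
      calc f (g t) / (y / t) ≤ f (g t) / f (l⁻¹ * g t) :=
            div_le_div_of_nonneg_left (hpos _ hg0).le hfl hsf
        _ < c := h1
  -- t * f(g t) → y
  have htf : Tendsto (fun t => t * f (g t)) F (nhds y) := by
    have h1 := hone.const_mul y
    rw [mul_one] at h1
    refine h1.congr' ?_
    filter_upwards [hev] with t ht
    have ht0 : t ≠ 0 := ht.1.ne'
    field_simp
  have hfin := (hratio u hu).mul htf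
  refine hfin.congr' ?_
  filter_upwards [hK] with t ht
  have hne : f (g t) ≠ 0 := (hpos _ ht.1).ne'
  field_simp
  ring
end

section
/- Let α > 0 and let f : (0,∞) → (0,∞) be nonincreasing and regularly varying at 0 with index -α. Then (f(x−) − f(x))/f(x) → 0 as x ↓ 0, where f(x−) denotes the left limit of f at x. -/
open MeasureTheory Filter Topology

/-- if `f : (0,∞) → (0,∞)` is nonincreasing and regularly varying at 0 with
index `-α` (`α > 0`), then `(f(x−) − f(x))/f(x) → 0` as `x ↓ 0`, where `f(x−)` is the
left limit of `f` at `x`. -/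
theorem stmt1 (α : ℝ) (hα : 0 < α) (f : ℝ → ℝ)
    (hpos : ∀ x : ℝ, 0 < x → 0 < f x)
    (hmono : AntitoneOn f (Set.Ioi (0 : ℝ)))
    (hrv : ∀ l : ℝ, 0 < l →
      Tendsto (fun x : ℝ => f (l * x) / f x) (nhdsWithin 0 (Set.Ioi 0)) (nhds (l ^ (-α)))) :
    Tendsto (fun x : ℝ => (Function.leftLim f x - f x) / f x)
      (nhdsWithin 0 (Set.Ioi 0)) (nhds 0) := by
  -- left limit is the infimum over `Ioo 0 x`
  have hbdd : ∀ x : ℝ, 0 < x → BddBelow (f '' Set.Ioo 0 x) := by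
    intro x hx
    exact ⟨0, fun y hy => by
      obtain ⟨z, hz, rfl⟩ := hy
      exact (hpos z hz.1).le⟩
  have hll : ∀ x : ℝ, 0 < x → Function.leftLim f x = sInf (f '' Set.Ioo 0 x) := by
    intro x hx
    have hne : (Set.Ioo (0:ℝ) x).Nonempty := ⟨x/2, by positivity, by linarith⟩
    have haf : AntitoneOn f (Set.Ioo 0 x) := hmono.mono (fun y hy => hy.1)
    exact leftLim_eq_of_tendsto
      (haf.tendsto_nhdsWithin_Ioo_left hne (hbdd x hx))
  -- lower bound: f x ≤ leftLim f x
  have hlow : ∀ x : ℝ, 0 < x → f x ≤ Function.leftLim f x := by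
    intro x hx
    rw [hll x hx]
    refine le_csInf ((Set.nonempty_Ioo.2 hx).image _) ?_
    rintro y ⟨z, hz, rfl⟩
    exact hmono (Set.mem_Ioi.2 hz.1) hx hz.2.le
  -- upper bound: leftLim f x ≤ f (l * x) for 0 < l < 1
  have hup : ∀ l : ℝ, 0 < l → l < 1 → ∀ x : ℝ, 0 < x →
      Function.leftLim f x ≤ f (l * x) := by
    intro l hl0 hl1 x hx
    rw [hll x hx]
    refine csInf_le (hbdd x hx) ⟨l * x, ⟨by positivity, ?_⟩, rfl⟩
    nlinarith
  -- main ε argument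
  rw [NormedAddCommGroup.tendsto_nhds_zero]
  intro ε hε
  set l : ℝ := (1 + ε/2) ^ (-1/α) with hl
  have hbase : (1:ℝ) < 1 + ε/2 := by linarith
  have hlpos : 0 < l := Real.rpow_pos_of_pos (by linarith) _
  have hexp : (-1/α : ℝ) < 0 := div_neg_of_neg_of_pos (by norm_num) hα
  have hl1 : l < 1 := Real.rpow_lt_one_of_one_lt_of_neg hbase hexp
  have hlval : l ^ (-α) = 1 + ε/2 := by
    rw [hl, ← Real.rpow_mul (by linarith)]
    have : (-1/α) * (-α) = 1 := by field_simp
    rw [this, Real.rpow_one]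
  have hrvl := hrv l hlpos
  rw [hlval] at hrvl
  have hev : ∀ᶠ x in nhdsWithin (0:ℝ) (Set.Ioi 0), f (l * x) / f x < 1 + ε :=
    hrvl.eventually_lt_const (by linarith)
  filter_upwards [hev, self_mem_nhdsWithin] with x hx₁ hx₂
  have hx : (0:ℝ) < x := hx₂
  have hfx : 0 < f x := hpos x hx
  have h1 : 0 ≤ (Function.leftLim f x - f x) / f x := by
    apply div_nonneg _ hfx.le
    linarith [hlow x hx]
  have h2 : (Function.leftLim f x - f x) / f x < ε := by
    have hle : Function.leftLim f x ≤ f (l * x) := hup l hlpos hl1 x hx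
    have h3 : (Function.leftLim f x - f x) / f x ≤ (f (l * x) - f x) / f x := by
      gcongr
    have h4 : (f (l * x) - f x) / f x = f (l * x) / f x - 1 := by
      rw [sub_div, div_self hfx.ne']
    linarith
  rw [Real.norm_eq_abs, abs_of_nonneg h1]
  exact h2
end

section
/- Let α > 0 and let f : (0,∞) → (0,∞) be nonincreasing and regularly varying at 0 with index -α, with f(x) → ∞ as x ↓ 0. Then for every v > 0, t·f((v^{-1/α}·f^←(1/t))−) → v as t ↓ 0, where f(x−) denotes the left limit of f at x. -/
open MeasureTheory Filter Topology

lemma geninv_gt {f : ℝ → ℝ} {y x : ℝ} (hx : 0 < x) (h : x < geninv f y) : y < f x := by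
  by_contra h'
  push_neg at h'
  have : geninv f y ≤ x := csInf_le ⟨0, fun z hz => hz.1.le⟩ ⟨hx, h'⟩
  linarith

lemma geninv_le {f : ℝ → ℝ} (hmono : AntitoneOn f (Set.Ioi (0 : ℝ))) {y x : ℝ}
    (hne : {x : ℝ | 0 < x ∧ f x ≤ y}.Nonempty) (hx : geninv f y < x) : f x ≤ y := by
  obtain ⟨x', hx', hx'x⟩ := exists_lt_of_csInf_lt hne hx
  exact le_trans (hmono hx'.1 (lt_trans hx'.1 hx'x) hx'x.le) hx'.2

lemma leftLim_bounds {f : ℝ → ℝ} (hmono : AntitoneOn f (Set.Ioi (0 : ℝ))) {w z : ℝ}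
    (hw : 0 < w) (hwz : w < z) :
    f z ≤ Function.leftLim f z ∧ Function.leftLim f z ≤ f w := by
  have hz : 0 < z := hw.trans hwz
  have hA : AntitoneOn f (Set.Ioo 0 z) := hmono.mono (fun a ha => ha.1)
  have hbdd : BddBelow (f '' Set.Ioo 0 z) := by
    refine ⟨f z, ?_⟩
    rintro _ ⟨a, ha, rfl⟩
    exact hmono ha.1 hz ha.2.le
  have hne : (Set.Ioo (0:ℝ) z).Nonempty := ⟨w, hw, hwz⟩
  have ht : Tendsto f (𝓝[<] z) (𝓝 (sInf (f '' Set.Ioo 0 z))) :=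
    hA.tendsto_nhdsWithin_Ioo_left hne hbdd
  have hll : Function.leftLim f z = sInf (f '' Set.Ioo 0 z) :=
    leftLim_eq_of_tendsto ht
  rw [hll]
  constructor
  · refine le_csInf (hne.image f) ?_
    rintro _ ⟨a, ha, rfl⟩
    exact hmono ha.1 hz ha.2.le
  · exact csInf_le hbdd ⟨w, ⟨hw, hwz⟩, rfl⟩

/-- if `f : (0,∞) → (0,∞)` is nonincreasing, regularly varying at 0 with
index `-α` (`α > 0`) and `f(x) → ∞` as `x ↓ 0`, then for every `v > 0`,
`t · f((v^{-1/α} · f^←(1/t))−) → v` as `t ↓ 0`, where `f(z−)` is the left limit. -/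
theorem stmt2 (α : ℝ) (hα : 0 < α) (f : ℝ → ℝ)
    (hpos : ∀ x : ℝ, 0 < x → 0 < f x)
    (hmono : AntitoneOn f (Set.Ioi (0 : ℝ)))
    (hrv : ∀ l : ℝ, 0 < l →
      Tendsto (fun x : ℝ => f (l * x) / f x) (nhdsWithin 0 (Set.Ioi 0)) (nhds (l ^ (-α))))
    (hinf : Tendsto f (nhdsWithin 0 (Set.Ioi 0)) atTop)
    (v : ℝ) (hv : 0 < v) :
    Tendsto (fun t : ℝ => t * Function.leftLim f (v ^ (-1 / α) * geninv f (1 / t)))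
      (nhdsWithin 0 (Set.Ioi 0)) (nhds v) := by
  set c : ℝ := v ^ (-1 / α) with hc_def
  have hc : 0 < c := Real.rpow_pos_of_pos hv _
  have hcv : c ^ (-α) = v := by
    rw [hc_def, ← Real.rpow_mul hv.le, show (-1 / α) * (-α) = 1 by field_simp, Real.rpow_one]
  set u : ℝ → ℝ := fun t => geninv f (1 / t) with hu_def
  -- nonemptiness of the defining set, eventually
  have hS_ne : ∀ᶠ t in 𝓝[>] (0:ℝ), {x : ℝ | 0 < x ∧ f x ≤ 1 / t}.Nonempty := by
    have hf1 : 0 < f 1 := hpos 1 one_pos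
    filter_upwards [Ioo_mem_nhdsGT (show (0:ℝ) < 1 / (f 1 + 1) by positivity)]
      with t ht
    refine ⟨1, one_pos, ?_⟩
    rw [le_div_iff₀ ht.1]
    have := ht.2
    rw [lt_div_iff₀ (by positivity : (0:ℝ) < f 1 + 1)] at this
    nlinarith
  -- eventual positivity of u
  have hu_pos : ∀ᶠ t in 𝓝[>] (0:ℝ), 0 < u t := by
    filter_upwards [hS_ne, self_mem_nhdsWithin] with t hne ht
    have ht0 : 0 < t := ht
    have hev : ∀ᶠ x in 𝓝[>] (0:ℝ), 1 / t + 1 ≤ f x := hinf.eventually_ge_atTop (1 / t + 1)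
    obtain ⟨δ, hδ, hsub⟩ := mem_nhdsGT_iff_exists_Ioo_subset.mp hev
    have hδ0 : (0:ℝ) < δ := hδ
    have : δ ≤ u t := by
      refine le_csInf hne ?_
      intro x hx
      by_contra hxδ
      push_neg at hxδ
      have := hsub ⟨hx.1, hxδ⟩
      have h1t : (0:ℝ) < 1 / t := by positivity
      have := hx.2
      simp only [Set.mem_setOf_eq] at *
      linarith [hsub ⟨hx.1, hxδ⟩]
    linarith
  have hu_nonneg : ∀ t : ℝ, 0 ≤ u t := fun t => Real.sInf_nonneg (fun x hx => hx.1.le)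
  -- u tends to 0
  have hu_nhds : Tendsto u (𝓝[>] (0:ℝ)) (𝓝 0) := by
    rw [Metric.tendsto_nhds]
    intro ε hε
    set δ := ε / 2 with hδ_def
    have hδ0 : 0 < δ := by positivity
    have hfδ : 0 < f δ := hpos δ hδ0
    filter_upwards [Ioo_mem_nhdsGT (show (0:ℝ) < 1 / (f δ + 1) by positivity)]
      with t ht
    have ht0 : 0 < t := ht.1
    have hfδt : f δ ≤ 1 / t := by
      rw [le_div_iff₀ ht0]
      have := ht.2
      rw [lt_div_iff₀ (by positivity : (0:ℝ) < f δ + 1)] at this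
      nlinarith
    have hle : u t ≤ δ := csInf_le ⟨0, fun z hz => hz.1.le⟩ ⟨hδ0, hfδt⟩
    rw [Real.dist_eq, sub_zero, abs_of_nonneg (hu_nonneg t)]
    linarith
  -- scaled u tends to 0 within (0,∞)
  have hscale : ∀ k : ℝ, 0 < k → Tendsto (fun t => k * u t) (𝓝[>] (0:ℝ)) (𝓝[>] (0:ℝ)) := by
    intro k hk
    rw [tendsto_nhdsWithin_iff]
    constructor
    · simpa only [mul_zero] using hu_nhds.const_mul k
    · filter_upwards [hu_pos] with t ht using mul_pos hk ht
  rw [Metric.tendsto_nhds]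
  intro ε hε
  -- choose μ > 1 with the two bounds
  have hg1 : Tendsto (fun μ : ℝ => (c / μ ^ 2) ^ (-α)) (𝓝 1) (𝓝 v) := by
    have h0 : ContinuousAt (fun μ : ℝ => (c / μ ^ 2) ^ (-α)) 1 := by
      apply ContinuousAt.rpow_const
      · fun_prop (disch := norm_num)
      · left; simpa using hc.ne'
    have := h0.tendsto
    simpa [hcv] using this
  have hg2 : Tendsto (fun μ : ℝ => (c * μ) ^ (-α)) (𝓝 1) (𝓝 v) := by
    have h0 : ContinuousAt (fun μ : ℝ => (c * μ) ^ (-α)) 1 := by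
      apply ContinuousAt.rpow_const
      · fun_prop
      · left; simpa using hc.ne'
    have := h0.tendsto
    simpa [hcv] using this
  have hev1 : ∀ᶠ μ in 𝓝[>] (1:ℝ), (c / μ ^ 2) ^ (-α) < v + ε :=
    ((hg1.mono_left nhdsWithin_le_nhds).eventually_lt_const (by linarith))
  have hev2 : ∀ᶠ μ in 𝓝[>] (1:ℝ), v - ε < (c * μ) ^ (-α) :=
    ((hg2.mono_left nhdsWithin_le_nhds).eventually_const_lt (by linarith))
  obtain ⟨μ, h1, h2, hμ1⟩ := (hev1.and (hev2.and self_mem_nhdsWithin)).exists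
  have hμ1' : (1:ℝ) < μ := hμ1
  have hμ0 : 0 < μ := lt_trans one_pos hμ1'
  set lam : ℝ := μ⁻¹ with hlam_def
  have hlam0 : 0 < lam := inv_pos.mpr hμ0
  have hlam1 : lam < 1 := inv_lt_one_of_one_lt₀ hμ1'
  -- regular variation events
  have E4 : ∀ᶠ t in 𝓝[>] (0:ℝ),
      f ((c / μ ^ 2) * (μ * u t)) / f (μ * u t) < v + ε :=
    (((hrv (c / μ ^ 2) (by positivity)).comp (hscale μ hμ0)).eventually_lt_const h1)
  have E5 : ∀ᶠ t in 𝓝[>] (0:ℝ),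
      v - ε < f ((c * μ) * (lam * u t)) / f (lam * u t) :=
    (((hrv (c * μ) (by positivity)).comp (hscale lam hlam0)).eventually_const_lt h2)
  filter_upwards [E4, E5, hu_pos, hS_ne, self_mem_nhdsWithin] with t h4 h5 hup hne ht
  have ht0 : 0 < t := ht
  have harg1 : (c / μ ^ 2) * (μ * u t) = lam * (c * u t) := by
    rw [hlam_def]; field_simp
  have harg2 : (c * μ) * (lam * u t) = c * u t := by
    rw [hlam_def]; field_simp
  rw [harg1] at h4
  rw [harg2] at h5
  have hcu : 0 < c * u t := mul_pos hc hup
  have hlcu : 0 < lam * (c * u t) := mul_pos hlam0 hcu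
  have hlcu_lt : lam * (c * u t) < c * u t := by
    nlinarith
  obtain ⟨hL1, hL2⟩ := leftLim_bounds hmono hlcu hlcu_lt
  set L := Function.leftLim f (c * u t) with hL_def
  -- f (μ * u t) ≤ 1/t
  have hmuu : 0 < μ * u t := mul_pos hμ0 hup
  have hfmu_le : f (μ * u t) ≤ 1 / t := by
    refine geninv_le hmono hne ?_
    have : u t < μ * u t := by nlinarith
    exact this
  have hfmu_pos : 0 < f (μ * u t) := hpos _ hmuu
  -- 1/t < f (lam * u t)
  have hlu : 0 < lam * u t := mul_pos hlam0 hup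
  have hflu_gt : 1 / t < f (lam * u t) := by
    refine geninv_gt hlu ?_
    have : lam * u t < u t := by nlinarith
    exact this
  have hfcu_pos : 0 < f (c * u t) := hpos _ hcu
  have hL_pos : 0 < L := lt_of_lt_of_le hfcu_pos hL1
  have h1t : 0 < 1 / t := by positivity
  have htL : t * L = L / (1 / t) := by
    rw [div_div_eq_mul_div, div_one, mul_comm]
  -- upper bound
  have hupper : L / (1 / t) ≤ f (lam * (c * u t)) / f (μ * u t) :=
    div_le_div₀ (le_trans hL_pos.le hL2) hL2 hfmu_pos hfmu_le
  -- lower bound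
  have hlower : f (c * u t) / f (lam * u t) ≤ L / (1 / t) :=
    div_le_div₀ hL_pos.le hL1 h1t hflu_gt.le
  rw [Real.dist_eq, abs_sub_lt_iff]
  constructor
  · rw [htL]; linarith
  · rw [htL]; linarith
end

section
/- Let 0 < α < 1 and let Π be a Borel measure on (0,∞) whose tail Π̄(x) = Π((x,∞)) is finite for x > 0, regularly varying at 0 with index -α, and satisfies Π̄(x) → ∞ as x ↓ 0. Then there exist constants c' > 0, β > 0 and z₁ > 0 such that for all λ > 0, all t > 0 and all w > y > 0 with y/t ≥ z₁, t·∫_{(0,a)} (1 − e^{-λx/b}) Π(dx) ≤ c'·λ·y·(y/w)^β, where a = Π̄^←(w/t) and b = Π̄^←(y/t). -/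
open MeasureTheory ProbabilityTheory Filter Topology

set_option maxHeartbeats 2000000 in
/-- for `0 < α < 1` and a measure `Π` on `(0,∞)` with tail `Π̄` finite on
`(0,∞)`, regularly varying at 0 with index `-α`, and `Π̄(x) → ∞` as `x ↓ 0`, there exist
`c' > 0`, `β > 0`, `z₁ > 0` such that for all `λ > 0`, `t > 0` and `w > y > 0` with
`y/t ≥ z₁`, `t ∫_{(0,a)} (1 − e^{-λx/b}) Π(dx) ≤ c' λ y (y/w)^β` with `a = Π̄^←(w/t)`,
`b = Π̄^←(y/t)`. -/
theorem stmt11 (α : ℝ) (hα0 : 0 < α) (hα1 : α < 1)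
    (Pi : Measure ℝ) (hPisupp : Pi (Set.Iic 0) = 0)
    (tb : ℝ → ℝ) (htb : ∀ x : ℝ, tb x = (Pi (Set.Ioi x)).toReal)
    (hfin : ∀ x : ℝ, 0 < x → Pi (Set.Ioi x) < ⊤)
    (hrv : ∀ l : ℝ, 0 < l →
      Tendsto (fun x : ℝ => tb (l * x) / tb x) (nhdsWithin 0 (Set.Ioi 0)) (nhds (l ^ (-α))))
    (hinf : Tendsto tb (nhdsWithin 0 (Set.Ioi 0)) atTop) :
    ∃ c' : ℝ, 0 < c' ∧ ∃ β : ℝ, 0 < β ∧ ∃ z₁ : ℝ, 0 < z₁ ∧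
      ∀ lam : ℝ, 0 < lam → ∀ t : ℝ, 0 < t → ∀ w y : ℝ, 0 < y → y < w → z₁ ≤ y / t →
        t * ∫ x in Set.Ioo 0 (geninv tb (w / t)),
            (1 - Real.exp (-lam * x / geninv tb (y / t))) ∂Pi ≤
          c' * lam * y * (y / w) ^ β := by
  have h2 : (1:ℝ) < 2 := one_lt_two
  set K : ℝ := (2:ℝ) ^ ((α + 1)/2) with hKdef
  have hK1 : 1 < K := by
    rw [hKdef, show (1:ℝ) = 2 ^ (0:ℝ) by rw [Real.rpow_zero]]
    exact (Real.rpow_lt_rpow_left_iff h2).mpr (by linarith)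
  have hK2 : K < 2 := by
    calc K < 2 ^ (1:ℝ) := (Real.rpow_lt_rpow_left_iff h2).mpr (by linarith)
    _ = 2 := Real.rpow_one 2
  have hK0 : (0:ℝ) < K := lt_trans one_pos hK1
  have htbnn : ∀ x : ℝ, 0 ≤ tb x := by
    intro x; rw [htb x]; exact ENNReal.toReal_nonneg
  have htbmono : ∀ u v : ℝ, 0 < u → u ≤ v → tb v ≤ tb u := by
    intro u v hu huv
    rw [htb u, htb v]
    exact ENNReal.toReal_mono (hfin u hu).ne (measure_mono (Set.Ioi_subset_Ioi huv))
  have h2α : (2:ℝ) ^ α < K := (Real.rpow_lt_rpow_left_iff h2).mpr (by linarith)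
  have h12 : ((1:ℝ)/2) ^ (-α) = (2:ℝ) ^ α := by
    rw [one_div, Real.inv_rpow (by norm_num : (0:ℝ) ≤ 2),
      Real.rpow_neg (by norm_num : (0:ℝ) ≤ 2), inv_inv]
  have hlim : Tendsto (fun x : ℝ => tb (1/2 * x) / tb x) (𝓝[>] 0) (𝓝 ((2:ℝ) ^ α)) := by
    have h := hrv (1/2) (by norm_num)
    rwa [h12] at h
  have hev : ∀ᶠ x in 𝓝[>] (0:ℝ), tb (1/2 * x) / tb x < K ∧ 1 ≤ tb x :=
    (hlim.eventually_lt_const h2α).and (hinf.eventually_ge_atTop 1)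
  obtain ⟨X2, hX20, hX2⟩ := (nhdsGT_basis (0:ℝ)).eventually_iff.mp hev
  set X : ℝ := X2 / 2 with hXdef
  have hX0 : (0:ℝ) < X := by rw [hXdef]; linarith
  have hXprop : ∀ x : ℝ, 0 < x → x ≤ X → tb (x/2) ≤ K * tb x := by
    intro x hx hxX
    have hmem : x ∈ Set.Ioo (0:ℝ) X2 := ⟨hx, by rw [hXdef] at hxX; linarith⟩
    obtain ⟨hratio, hone⟩ := hX2 hmem
    have htbx : (0:ℝ) < tb x := lt_of_lt_of_le one_pos hone
    have h' := (div_lt_iff₀ htbx).mp hratio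
    have hx2 : x / 2 = 1/2 * x := by ring
    rw [hx2]
    exact le_of_lt h'
  have hiter : ∀ x : ℝ, 0 < x → x ≤ X → ∀ k : ℕ, tb (x / 2^k) ≤ K^k * tb x := by
    intro x hx hxX k
    induction k with
    | zero => simp
    | succ n ih =>
      have h1 : x / 2^(n+1) = (x / 2^n) / 2 := by ring
      have h2n : (0:ℝ) < x / 2^n := by positivity
      have hle1 : (1:ℝ) ≤ 2^n := one_le_pow₀ (by norm_num)
      have h3 : x / 2^n ≤ X := le_trans (div_le_self hx.le hle1) hxX
      calc tb (x/2^(n+1)) = tb ((x/2^n)/2) := by rw [h1]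
        _ ≤ K * tb (x/2^n) := hXprop _ h2n h3
        _ ≤ K * (K^n * tb x) := mul_le_mul_of_nonneg_left ih hK0.le
        _ = K^(n+1) * tb x := by ring
  set ρ : ℝ := Real.logb K 2 with hρdef
  have hlogK : 0 < Real.log K := Real.log_pos hK1
  have hρ1 : 1 < ρ := by
    rw [hρdef, Real.logb, lt_div_iff₀ hlogK, one_mul]
    exact Real.log_lt_log hK0 hK2
  have hρ0 : 0 < ρ := by linarith
  have hhalf : (0:ℝ) < 1 - K/2 := by linarith
  have hc'0 : (0:ℝ) < 2 * K^2 * (1 - K/2)⁻¹ := by positivity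
  have hz₁0 : (0:ℝ) < tb (X/2) + 1 := by nlinarith [htbnn (X/2)]
  refine ⟨2 * K^2 * (1 - K/2)⁻¹, hc'0, ρ - 1, by linarith, tb (X/2) + 1, hz₁0, ?_⟩
  intro lam hlam t ht w y hy hyw hyt
  set a : ℝ := geninv tb (w/t) with hadef
  set b : ℝ := geninv tb (y/t) with hbdef
  have hw : 0 < w := lt_trans hy hyw
  have hytwt : y/t ≤ w/t := by gcongr
  have hSy : (X/2) ∈ {x : ℝ | 0 < x ∧ tb x ≤ y/t} := ⟨by positivity, by linarith⟩
  have hSw : (X/2) ∈ {x : ℝ | 0 < x ∧ tb x ≤ w/t} := ⟨by positivity, le_trans hSy.2 hytwt⟩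
  have hbdd : ∀ c : ℝ, BddBelow {x : ℝ | 0 < x ∧ tb x ≤ c} := fun c => ⟨0, fun x hx => hx.1.le⟩
  have hbX : b ≤ X/2 := csInf_le (hbdd _) hSy
  have haX : a ≤ X/2 := csInf_le (hbdd _) hSw
  obtain ⟨δ2, hδ20, hδ2⟩ :=
    (nhdsGT_basis (0:ℝ)).eventually_iff.mp (hinf.eventually_gt_atTop (w/t))
  have hδlb : ∀ c : ℝ, c ≤ w/t → ∀ x ∈ {x : ℝ | 0 < x ∧ tb x ≤ c}, δ2/2 ≤ x := by
    intro c hc x hx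
    by_contra hcon
    push_neg at hcon
    have hmem : x ∈ Set.Ioo (0:ℝ) δ2 := ⟨hx.1, by linarith⟩
    exact absurd (hx.2.trans hc) (not_le.mpr (hδ2 hmem))
  have ha0 : 0 < a := lt_of_lt_of_le (by linarith) (le_csInf ⟨X/2, hSw⟩ (hδlb _ le_rfl))
  have hb0 : 0 < b := lt_of_lt_of_le (by linarith) (le_csInf ⟨X/2, hSy⟩ (hδlb _ hytwt))
  have hwy1 : 1 < w/y := (one_lt_div hy).mpr hyw
  set k : ℕ := ⌊Real.logb K (w/y)⌋₊ with hkdef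
  have hlogbnn : 0 ≤ Real.logb K (w/y) := Real.logb_nonneg hK1 hwy1.le
  have hKk : K ^ k ≤ w/y := by
    calc K ^ k = K ^ (k:ℝ) := (Real.rpow_natCast K k).symm
    _ ≤ K ^ Real.logb K (w/y) := (Real.rpow_le_rpow_left_iff hK1).mpr (Nat.floor_le hlogbnn)
    _ = w/y := Real.rpow_logb hK0 hK1.ne' (by positivity)
  have hKk1 : w/y < K ^ ((k:ℝ)+1) := by
    calc w/y = K ^ Real.logb K (w/y) := (Real.rpow_logb hK0 hK1.ne' (by positivity)).symm
    _ < K ^ ((k:ℝ)+1) := (Real.rpow_lt_rpow_left_iff hK1).mpr (Nat.lt_floor_add_one _)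
  -- a * 2^k ≤ b
  have habk : a * 2^k ≤ b := by
    have key : ∀ ε : ℝ, 0 < ε → a * 2^k ≤ b + ε := by
      intro ε hε
      have hcut : b < min (b + ε) X := lt_min (by linarith) (by linarith)
      obtain ⟨x, hxmem, hxlt⟩ := exists_lt_of_csInf_lt ⟨X/2, hSy⟩ hcut
      have hxX : x ≤ X := (hxlt.trans_le (min_le_right _ _)).le
      have hx0 : 0 < x := hxmem.1
      have hKkpos : (0:ℝ) < K^k := by positivity
      have hKky : K^k * y ≤ w := (le_div_iff₀ hy).mp hKk
      have hmem2 : x / 2^k ∈ {z : ℝ | 0 < z ∧ tb z ≤ w/t} := by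
        refine ⟨by positivity, ?_⟩
        calc tb (x/2^k) ≤ K^k * tb x := hiter x hx0 hxX k
        _ ≤ K^k * (y/t) := mul_le_mul_of_nonneg_left hxmem.2 hKkpos.le
        _ = (K^k * y)/t := by ring
        _ ≤ w/t := by gcongr
      have hale : a ≤ x / 2^k := csInf_le (hbdd _) hmem2
      have h2k : (0:ℝ) < 2^k := by positivity
      calc a * 2^k ≤ x := by rwa [← le_div_iff₀ h2k]
      _ ≤ b + ε := (hxlt.trans_le (min_le_left _ _)).le
    exact le_of_forall_pos_le_add key
  -- tail bounds at a/2^j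
  obtain ⟨x₀, hx₀mem, hx₀lt⟩ :=
    exists_lt_of_csInf_lt ⟨X/2, hSw⟩ (lt_min (by linarith : a < 2*a) (by linarith : a < X))
  have hax₀ : a ≤ x₀ := csInf_le (hbdd _) hx₀mem
  have hx₀2a : x₀ < 2*a := hx₀lt.trans_le (min_le_left _ _)
  have hx₀X : x₀ ≤ X := (hx₀lt.trans_le (min_le_right _ _)).le
  have hx₀0 : 0 < x₀ := hx₀mem.1
  have htail : ∀ j : ℕ, tb (a / 2^j) ≤ K^(j+1) * (w/t) := by
    intro j
    have h2j : (0:ℝ) < 2^j := by positivity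
    have h1 : x₀ / 2^(j+1) ≤ a / 2^j := by
      have hhalf' : x₀ / 2 ≤ a := by linarith
      calc x₀ / 2^(j+1) = (x₀/2) / 2^j := by ring
      _ ≤ a / 2^j := by gcongr
    calc tb (a/2^j) ≤ tb (x₀ / 2^(j+1)) := htbmono _ _ (by positivity) h1
    _ ≤ K^(j+1) * tb x₀ := hiter x₀ hx₀0 hx₀X (j+1)
    _ ≤ K^(j+1) * (w/t) := mul_le_mul_of_nonneg_left hx₀mem.2 (by positivity)
  have hcover : Set.Ioo (0:ℝ) a ⊆ ⋃ j : ℕ, Set.Ioc (a / 2^(j+1)) (a / 2^j) := by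
    intro x hx
    obtain ⟨hx0, hxa⟩ := hx
    have hax1 : 1 ≤ a / x := (one_le_div hx0).mpr hxa.le
    set j : ℕ := ⌊Real.logb 2 (a/x)⌋₊ with hjdef
    have hj1 : (2:ℝ)^j ≤ a/x := by
      calc (2:ℝ)^j = 2 ^ (j:ℝ) := (Real.rpow_natCast 2 j).symm
      _ ≤ 2 ^ Real.logb 2 (a/x) :=
        (Real.rpow_le_rpow_left_iff h2).mpr (Nat.floor_le (Real.logb_nonneg h2 hax1))
      _ = a/x := Real.rpow_logb (by norm_num) (by norm_num) (by positivity)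
    have hj2 : a/x < 2^(j+1) := by
      calc a/x = 2 ^ Real.logb 2 (a/x) :=
        (Real.rpow_logb (by norm_num) (by norm_num) (by positivity)).symm
      _ < 2 ^ ((j:ℝ)+1) := (Real.rpow_lt_rpow_left_iff h2).mpr (Nat.lt_floor_add_one _)
      _ = 2^(j+1) := by rw [show ((j:ℝ)+1) = ((j+1:ℕ):ℝ) by push_cast; ring, Real.rpow_natCast]
    refine Set.mem_iUnion.mpr ⟨j, ?_, ?_⟩
    · rw [div_lt_iff₀ (by positivity : (0:ℝ) < 2^(j+1))]
      have := (div_lt_iff₀ hx0).mp hj2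
      linarith [this]
    · rw [le_div_iff₀ (by positivity : (0:ℝ) < 2^j)]
      have := (le_div_iff₀ hx0).mp hj1
      linarith [this]
  have hPiTail : ∀ j : ℕ, Pi (Set.Ioi (a / 2^(j+1))) ≤ ENNReal.ofReal (K^(j+2) * (w/t)) := by
    intro j
    have hfin' := hfin (a/2^(j+1)) (by positivity)
    have heq : Pi (Set.Ioi (a/2^(j+1))) = ENNReal.ofReal (tb (a/2^(j+1))) := by
      rw [htb, ENNReal.ofReal_toReal hfin'.ne]
    rw [heq]
    exact ENNReal.ofReal_le_ofReal (by simpa using htail (j+1))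
  set S : ENNReal := ∫⁻ x in Set.Ioo (0:ℝ) a, ENNReal.ofReal x ∂Pi with hSdef
  have hterm : ∀ j : ℕ, (∫⁻ x in Set.Ioc (a/2^(j+1)) (a/2^j), ENNReal.ofReal x ∂Pi)
      ≤ ENNReal.ofReal (a * K^2 * (w/t)) * (ENNReal.ofReal (K/2))^j := by
    intro j
    calc ∫⁻ x in Set.Ioc (a/2^(j+1)) (a/2^j), ENNReal.ofReal x ∂Pi
        ≤ ∫⁻ _ in Set.Ioc (a/2^(j+1)) (a/2^j), ENNReal.ofReal (a/2^j) ∂Pi := by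
          refine setLIntegral_mono measurable_const ?_
          intro x hx
          exact ENNReal.ofReal_le_ofReal hx.2
      _ = ENNReal.ofReal (a/2^j) * Pi (Set.Ioc (a/2^(j+1)) (a/2^j)) := setLIntegral_const _ _
      _ ≤ ENNReal.ofReal (a/2^j) * ENNReal.ofReal (K^(j+2) * (w/t)) := by
          gcongr
          exact le_trans (measure_mono Set.Ioc_subset_Ioi_self) (hPiTail j)
      _ = ENNReal.ofReal ((a/2^j) * (K^(j+2) * (w/t))) := (ENNReal.ofReal_mul (by positivity)).symm
      _ = ENNReal.ofReal ((a * K^2 * (w/t)) * (K/2)^j) := by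
          congr 1
          rw [div_pow]
          field_simp
          ring
      _ = ENNReal.ofReal (a * K^2 * (w/t)) * ENNReal.ofReal ((K/2)^j) :=
          ENNReal.ofReal_mul (by positivity)
      _ = ENNReal.ofReal (a * K^2 * (w/t)) * (ENNReal.ofReal (K/2))^j := by
          rw [ENNReal.ofReal_pow (by positivity)]
  have hS : S ≤ ENNReal.ofReal (a * K^2 * (w/t) * (1 - K/2)⁻¹) := by
    have h1 : S ≤ ∑' j : ℕ, ∫⁻ x in Set.Ioc (a/2^(j+1)) (a/2^j), ENNReal.ofReal x ∂Pi :=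
      le_trans (lintegral_mono_set hcover) (lintegral_iUnion_le _ _)
    have h3 : ∑' j : ℕ, ENNReal.ofReal (a*K^2*(w/t)) * (ENNReal.ofReal (K/2))^j
        = ENNReal.ofReal (a*K^2*(w/t)) * (1 - ENNReal.ofReal (K/2))⁻¹ := by
      rw [ENNReal.tsum_mul_left, ENNReal.tsum_geometric]
    have h4 : (1 - ENNReal.ofReal (K/2))⁻¹ = ENNReal.ofReal ((1 - K/2)⁻¹) := by
      rw [← ENNReal.ofReal_one, ← ENNReal.ofReal_sub 1 (by positivity : (0:ℝ) ≤ K/2)]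
      exact (ENNReal.ofReal_inv_of_pos hhalf).symm
    calc S ≤ ∑' j : ℕ, ∫⁻ x in Set.Ioc (a/2^(j+1)) (a/2^j), ENNReal.ofReal x ∂Pi := h1
    _ ≤ ∑' j : ℕ, ENNReal.ofReal (a*K^2*(w/t)) * (ENNReal.ofReal (K/2))^j :=
        ENNReal.tsum_le_tsum hterm
    _ = ENNReal.ofReal (a*K^2*(w/t)) * ENNReal.ofReal ((1 - K/2)⁻¹) := by rw [h3, h4]
    _ = ENNReal.ofReal (a * K^2 * (w/t) * (1 - K/2)⁻¹) :=
        (ENNReal.ofReal_mul (by positivity)).symm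
  -- bound the Bochner integral
  set M : ℝ := lam / b * (a * K^2 * (w/t) * (1 - K/2)⁻¹) with hMdef
  have hint : ∫ x in Set.Ioo (0:ℝ) a, (1 - Real.exp (-lam * x / b)) ∂Pi ≤ M := by
    have hmeas : AEStronglyMeasurable (fun x : ℝ => 1 - Real.exp (-lam * x / b))
        (Pi.restrict (Set.Ioo 0 a)) := by
      apply Continuous.aestronglyMeasurable
      have c1 : Continuous fun x : ℝ => -lam * x / b := by fun_prop
      exact continuous_const.sub (Real.continuous_exp.comp c1)
    have hnn : 0 ≤ᵐ[Pi.restrict (Set.Ioo 0 a)] fun x => 1 - Real.exp (-lam * x / b) := by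
      refine (ae_restrict_iff' measurableSet_Ioo).mpr (ae_of_all _ ?_)
      intro x hx
      have hxp : (0:ℝ) < x := hx.1
      have hexp : -lam * x / b ≤ 0 := by
        apply div_nonpos_of_nonpos_of_nonneg _ hb0.le
        nlinarith
      have := Real.exp_le_one_iff.mpr hexp
      show (0:ℝ) ≤ 1 - Real.exp (-lam * x / b)
      linarith
    rw [integral_eq_lintegral_of_nonneg_ae hnn hmeas]
    have step : ∀ x : ℝ, ENNReal.ofReal (1 - Real.exp (-lam * x / b))
        ≤ ENNReal.ofReal (lam/b) * ENNReal.ofReal x := by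
      intro x
      rcases le_or_gt x 0 with hx | hx
      · have h0 : (0:ℝ) ≤ -lam * x / b := by
          apply div_nonneg _ hb0.le
          nlinarith
        have h1 : 1 - Real.exp (-lam * x / b) ≤ 0 := by
          have := Real.one_le_exp h0
          linarith
        rw [ENNReal.ofReal_eq_zero.mpr h1]
        exact zero_le
      · rw [← ENNReal.ofReal_mul (by positivity)]
        apply ENNReal.ofReal_le_ofReal
        have hexp : -(lam * x / b) + 1 ≤ Real.exp (-(lam * x / b)) := Real.add_one_le_exp _
        have heq : -lam * x / b = -(lam * x / b) := by ring
        rw [heq]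
        have : lam / b * x = lam * x / b := by ring
        linarith [this]
    have hle : (∫⁻ x in Set.Ioo (0:ℝ) a, ENNReal.ofReal (1 - Real.exp (-lam * x / b)) ∂Pi)
        ≤ ENNReal.ofReal (lam/b) * S := by
      calc (∫⁻ x in Set.Ioo (0:ℝ) a, ENNReal.ofReal (1 - Real.exp (-lam * x / b)) ∂Pi)
          ≤ ∫⁻ x in Set.Ioo (0:ℝ) a, ENNReal.ofReal (lam/b) * ENNReal.ofReal x ∂Pi :=
            lintegral_mono fun x => step x
        _ = ENNReal.ofReal (lam/b) * S := lintegral_const_mul' _ _ ENNReal.ofReal_ne_top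
    have hfin2 : ENNReal.ofReal (lam/b) * S ≤ ENNReal.ofReal M := by
      calc ENNReal.ofReal (lam/b) * S
          ≤ ENNReal.ofReal (lam/b) * ENNReal.ofReal (a * K^2 * (w/t) * (1 - K/2)⁻¹) := by
            gcongr
        _ = ENNReal.ofReal M := (ENNReal.ofReal_mul (by positivity)).symm
    calc (∫⁻ x in Set.Ioo (0:ℝ) a, ENNReal.ofReal (1 - Real.exp (-lam * x / b)) ∂Pi).toReal
        ≤ (ENNReal.ofReal M).toReal :=
          ENNReal.toReal_mono ENNReal.ofReal_ne_top (le_trans hle hfin2)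
      _ = M := ENNReal.toReal_ofReal (by positivity)
  -- final arithmetic
  have h2K : (2:ℝ) = K ^ ρ := (Real.rpow_logb hK0 hK1.ne' two_pos).symm
  have h2keq : (2:ℝ)^k = K ^ (ρ * (k:ℝ)) := by
    rw [Real.rpow_mul hK0.le, ← h2K, Real.rpow_natCast]
  have hwyρ : (w/y)^ρ < 2^k * 2 := by
    calc (w/y)^ρ < (K ^ ((k:ℝ)+1))^ρ :=
        Real.rpow_lt_rpow (by positivity) hKk1 hρ0
    _ = K ^ (((k:ℝ)+1) * ρ) := (Real.rpow_mul hK0.le _ _).symm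
    _ = K ^ (ρ * (k:ℝ) + ρ) := by ring_nf
    _ = K ^ (ρ * (k:ℝ)) * K ^ ρ := Real.rpow_add hK0 _ _
    _ = 2^k * 2 := by rw [← h2keq, ← h2K]
  have hwyρ0 : (0:ℝ) < (w/y)^ρ := Real.rpow_pos_of_pos (by positivity) ρ
  have hywρ : (y/w)^ρ = ((w/y)^ρ)⁻¹ := by
    rw [show y/w = (w/y)⁻¹ by rw [inv_div], Real.inv_rpow (by positivity)]
  have habdiv : a / b ≤ 2 * (y/w)^ρ := by
    have h2k0 : (0:ℝ) < 2^k := by positivity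
    have h1 : a / b ≤ 1 / 2^k := (div_le_div_iff₀ hb0 h2k0).mpr (by rw [one_mul]; exact habk)
    have h2 : (1:ℝ) / 2^k ≤ 2 / (w/y)^ρ :=
      (div_le_div_iff₀ h2k0 hwyρ0).mpr
        (by rw [one_mul]; exact le_of_lt (hwyρ.trans_eq (mul_comm _ _)))
    calc a/b ≤ 1/2^k := h1
    _ ≤ 2/(w/y)^ρ := h2
    _ = 2 * (y/w)^ρ := by rw [hywρ]; ring
  have hsplit : (y/w) * (y/w)^(ρ-1) = (y/w)^ρ := by
    nth_rewrite 1 [← Real.rpow_one (y/w)]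
    rw [← Real.rpow_add (by positivity)]
    congr 1
    ring
  have htw : t * (w/t) = w := by rw [mul_comm, div_mul_cancel₀ _ ht.ne']
  have hMeq : t * M = lam * (K^2 * (1-K/2)⁻¹) * w * (a/b) := by
    calc t * M = (t * (w/t)) * (lam/b) * (a * K^2 * (1-K/2)⁻¹) := by rw [hMdef]; ring
    _ = w * (lam/b) * (a * K^2 * (1-K/2)⁻¹) := by rw [htw]
    _ = lam * (K^2 * (1-K/2)⁻¹) * w * (a/b) := by ring
  have hfinal : t * M ≤ 2*K^2*(1-K/2)⁻¹ * lam * y * (y/w)^(ρ-1) := by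
    calc t * M = lam * (K^2*(1-K/2)⁻¹) * w * (a/b) := hMeq
    _ ≤ lam * (K^2*(1-K/2)⁻¹) * w * (2*(y/w)^ρ) := by
        have hc : (0:ℝ) < lam * (K^2*(1-K/2)⁻¹) * w := by positivity
        exact mul_le_mul_of_nonneg_left habdiv hc.le
    _ = 2*K^2*(1-K/2)⁻¹ * lam * (w * ((y/w) * (y/w)^(ρ-1))) := by rw [hsplit]; ring
    _ = 2*K^2*(1-K/2)⁻¹ * lam * y * (y/w)^(ρ-1) := by
        rw [show w * ((y/w) * (y/w)^(ρ-1)) = (w * (y/w)) * (y/w)^(ρ-1) by ring,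
          show w * (y/w) = y by field_simp]
        ring
  calc t * ∫ x in Set.Ioo (0:ℝ) a, (1 - Real.exp (-lam * x / b)) ∂Pi
      ≤ t * M := mul_le_mul_of_nonneg_left hint ht.le
    _ ≤ _ := hfinal
end

section
/- Let α > 0 and let f : (0,∞) → (0,∞) be nonincreasing, right-continuous and regularly varying at 0 with index -α, with f(x) → ∞ as x ↓ 0. Then there exist constants C > 0 and v₀ > 0 such that f(f^←(v)−) ≤ C·v for all v ≥ v₀, where f(z−) denotes the left limit of f at z. -/
open MeasureTheory Filter Topology

/-- if `f : (0,∞) → (0,∞)` is nonincreasing, right-continuous and regularly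
varying at 0 with index `-α` (`α > 0`), with `f(x) → ∞` as `x ↓ 0`, then there exist
`C > 0` and `v₀ > 0` such that `f(f^←(v)−) ≤ C v` for all `v ≥ v₀`. -/
theorem stmt12 (α : ℝ) (hα : 0 < α) (f : ℝ → ℝ)
    (hpos : ∀ x : ℝ, 0 < x → 0 < f x)
    (hmono : AntitoneOn f (Set.Ioi (0 : ℝ)))
    (hrc : ∀ x : ℝ, 0 < x → ContinuousWithinAt f (Set.Ici x) x)
    (hrv : ∀ l : ℝ, 0 < l →
      Tendsto (fun x : ℝ => f (l * x) / f x) (nhdsWithin 0 (Set.Ioi 0)) (nhds (l ^ (-α))))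
    (hinf : Tendsto f (nhdsWithin 0 (Set.Ioi 0)) atTop) :
    ∃ C : ℝ, 0 < C ∧ ∃ v₀ : ℝ, 0 < v₀ ∧
      ∀ v : ℝ, v₀ ≤ v → Function.leftLim f (geninv f v) ≤ C * v := by
  set K : ℝ := (1/2 : ℝ) ^ (-α) with hK
  have hKpos : 0 < K := Real.rpow_pos_of_pos (by norm_num) _
  set C : ℝ := K + 1 with hC
  have hCpos : 0 < C := by positivity
  -- extract δ from regular variation at λ = 1/2
  have hev : ∀ᶠ x in nhdsWithin (0:ℝ) (Set.Ioi 0), f ((1/2) * x) / f x < C :=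
    (hrv (1/2) (by norm_num)).eventually (eventually_lt_nhds (by simp [hC, hK]))
  obtain ⟨u, hu, huδ⟩ := mem_nhdsGT_iff_exists_Ioo_subset.1 hev
  set δ : ℝ := u with hδ
  have hδpos : (0:ℝ) < δ := hu
  refine ⟨C, hCpos, max (f (δ/2)) 1, lt_max_of_lt_right one_pos, ?_⟩
  intro v hv
  have hv1 : (1:ℝ) ≤ v := le_trans (le_max_right _ _) hv
  have hvpos : (0:ℝ) < v := by linarith
  set S : Set ℝ := {x : ℝ | 0 < x ∧ f x ≤ v} with hS
  have hmemδ : δ/2 ∈ S := ⟨by linarith, le_trans (le_trans (le_max_left _ _) hv) le_rfl⟩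
  have hSne : S.Nonempty := ⟨δ/2, hmemδ⟩
  have hSbdd : BddBelow S := ⟨0, fun x hx => le_of_lt hx.1⟩
  set z : ℝ := geninv f v with hz
  have hzdef : z = sInf S := rfl
  have hzle : z ≤ δ/2 := csInf_le hSbdd hmemδ
  -- z > 0
  have hzpos : 0 < z := by
    obtain ⟨w, hw, hwη⟩ := mem_nhdsGT_iff_exists_Ioo_subset.1
      (hinf.eventually (eventually_gt_atTop v))
    have hwlb : ∀ x ∈ S, w ≤ x := by
      intro x hx
      by_contra h
      push_neg at h
      exact absurd hx.2 (not_le_of_gt (hwη ⟨hx.1, h⟩))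
    exact lt_of_lt_of_le hw (le_csInf hSne hwlb)
  -- f z ≤ v
  have hfz : f z ≤ v := by
    by_contra h
    push_neg at h
    have : ∀ᶠ x in nhdsWithin z (Set.Ici z), v < f x :=
      (hrc z hzpos).eventually (eventually_gt_nhds h)
    obtain ⟨w, hw, hwI⟩ := mem_nhdsGE_iff_exists_Ico_subset.1 this
    have : w ≤ z := by
      refine le_csInf hSne fun x hx => ?_
      by_contra hxw
      push_neg at hxw
      have hzx : z ≤ x := csInf_le hSbdd hx
      exact absurd hx.2 (not_le_of_gt (hwI ⟨hzx, hxw⟩))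
    exact absurd hw (not_lt_of_ge this)
  -- ratio bound at z
  have hzδ : z ∈ Set.Ioo (0:ℝ) δ := ⟨hzpos, by linarith⟩
  have hratio : f ((1/2) * z) / f z < C := huδ hzδ
  have hfz2 : f (z/2) < C * f z := by
    have h12 : (1/2 : ℝ) * z = z/2 := by ring
    have := (div_lt_iff₀ (hpos z hzpos)).1 hratio
    rwa [h12] at this
  -- left limit bound via auxiliary antitone function
  set g : ℝ → ℝ := fun x => f (max x (z/2)) with hg
  have hz2pos : 0 < z/2 := by linarith
  have hgmono : AntitoneOn g (Set.Iio z) := by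
    intro a _ b _ hab
    exact hmono (Set.mem_Ioi.2 (lt_max_of_lt_right hz2pos))
      (Set.mem_Ioi.2 (lt_max_of_lt_right hz2pos)) (max_le_max hab le_rfl)
  have hgbdd : BddBelow (g '' Set.Iio z) := by
    refine ⟨f z, ?_⟩
    rintro y ⟨x, hx, rfl⟩
    exact hmono (Set.mem_Ioi.2 (lt_max_of_lt_right hz2pos)) (Set.mem_Ioi.2 hzpos)
      (max_le (le_of_lt hx) (by linarith))
  have hgt : Tendsto g (nhdsWithin z (Set.Iio z)) (nhds (sInf (g '' Set.Iio z))) :=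
    hgmono.tendsto_nhdsLT hgbdd
  have hfg : f =ᶠ[nhdsWithin z (Set.Iio z)] g := by
    filter_upwards [Ioo_mem_nhdsLT_of_mem (Set.mem_Ioc.2 ⟨by linarith, le_rfl⟩ :
      z ∈ Set.Ioc (z/2) z)] with x hx
    simp [hg, max_eq_left (le_of_lt hx.1)]
  have hft : Tendsto f (nhdsWithin z (Set.Iio z)) (nhds (sInf (g '' Set.Iio z))) :=
    hgt.congr' hfg.symm
  have hll : Function.leftLim f z = sInf (g '' Set.Iio z) :=
    leftLim_eq_of_tendsto hft
  have hLle : sInf (g '' Set.Iio z) ≤ f (z/2) := by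
    have : g (z/2) = f (z/2) := by simp [hg]
    calc sInf (g '' Set.Iio z) ≤ g (z/2) :=
          csInf_le hgbdd (Set.mem_image_of_mem _ (Set.mem_Iio.2 (by linarith)))
      _ = f (z/2) := this
  calc Function.leftLim f z ≤ f (z/2) := hll ▸ hLle
    _ ≤ C * f z := le_of_lt hfz2
    _ ≤ C * v := mul_le_mul_of_nonneg_left hfz (le_of_lt hCpos)
end
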